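/- For all s ≥ 1, t ≥ 0, i ≥ 0 and every integer m (with y invertible), Σ_{j=0}^{i} (−1)^{(sj+2(s+1))(j+1)/2} · C(t+1,j)_{F_s(x,y)} · F_{ts(i−j)+m}(x,y) · y^{sj(j−1)/2} = (−1)^{s+i+1+si(i+1)/2} · C(t,i)_{F_s(x,y)} · F_{m−is}(x,y) · y^{si(i+1)/2}, where C(t,i)_{F_s} = 0 when i > t. -/

import Mathlib

/-- Bivariate Fibonacci polynomials. -/
def bF {K : Type*} [Field K] (x y : K) : ℕ → K
  | 0 => 0
  | 1 => 1
  | n + 2 => x * bF x y (n + 1) + y * bF x y n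

/-- Bivariate Fibonacci polynomials extended to all integer indices. -/
noncomputable def zF {K : Type*} [Field K] (x y : K) (n : ℤ) : K :=
  if 0 ≤ n then bF x y n.toNat else -((-y) ^ n) * bF x y (-n).toNat

/-- The bivariate s-Fibopolynomial (equal to 0 when k > n, since F_0 = 0
appears in the numerator). -/
noncomputable def fibo {K : Type*} [Field K] (x y : K) (s n k : ℕ) : K :=
  (∏ i ∈ Finset.range k, bF x y (s * (n - i))) / ∏ i ∈ Finset.range k, bF x y (s * (i + 1))

/-- The field ℚ(x,y) of rational functions in two variables. -/
noncomputable abbrev RF2 : Type := FractionRing (MvPolynomial (Fin 2) ℚ)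

noncomputable def Xv : RF2 := algebraMap (MvPolynomial (Fin 2) ℚ) RF2 (MvPolynomial.X 0)
noncomputable def Yv : RF2 := algebraMap (MvPolynomial (Fin 2) ℚ) RF2 (MvPolynomial.X 1)


section general
variable {K : Type*} [Field K] (x y : K)

lemma bF_add_two (n : ℕ) : bF x y (n+2) = x * bF x y (n+1) + y * bF x y n := rfl

lemma zF_natCast (n : ℕ) : zF x y (n : ℤ) = bF x y n := by
  simp [zF]

lemma zF_zero : zF x y 0 = 0 := by simp [zF, bF]

lemma zF_one : zF x y 1 = 1 := by
  have := zF_natCast x y 1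
  norm_num at this
  simpa [bF] using this

lemma zF_neg (k : ℕ) : zF x y (-(k : ℤ)) = -(-y) ^ (-(k:ℤ)) * bF x y k := by
  cases k with
  | zero => simp [zF, bF]
  | succ k =>
    rw [zF, if_neg (by omega)]
    norm_num

lemma zF_neg_one (hy : y ≠ 0) : zF x y (-1) = y⁻¹ := by
  have := zF_neg x y 1
  norm_num [bF] at this
  rw [this]

lemma zF_add_two (hy : y ≠ 0) (n : ℤ) : zF x y (n + 2) = x * zF x y (n + 1) + y * zF x y n := by
  have hw : (-y) ≠ 0 := neg_ne_zero.mpr hy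
  rcases le_or_gt 0 n with h | h
  · lift n to ℕ using h
    rw [show (n:ℤ)+2 = ((n+2 : ℕ):ℤ) by push_cast; ring,
        show (n:ℤ)+1 = ((n+1:ℕ):ℤ) by push_cast; ring,
        zF_natCast, zF_natCast, zF_natCast, bF_add_two]
  · have h1 : n = -1 ∨ n = -2 ∨ n ≤ -3 := by omega
    rcases h1 with rfl | rfl | h1
    · norm_num [zF_one, zF_zero, zF_neg_one x y hy]
      rw [mul_inv_cancel₀ hy]
    · norm_num [zF_zero, zF_neg_one x y hy]
      rw [show (-2:ℤ) = -((2:ℕ):ℤ) by norm_num, zF_neg]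
      rw [show bF x y 2 = x from by simp [bF]]
      rw [zpow_neg, show ((2:ℕ):ℤ) = (2:ℤ) from by norm_num,
          show ((-y):K)^(2:ℤ) = y^2 from by rw [zpow_two]; ring]
      field_simp
      ring
    · obtain ⟨k, rfl⟩ : ∃ k : ℕ, n = -((k:ℤ)+3) := ⟨(-n-3).toNat, by omega⟩
      rw [show -((k:ℤ)+3)+2 = -(((k+1:ℕ)):ℤ) by push_cast; ring,
          show -((k:ℤ)+3)+1 = -(((k+2:ℕ)):ℤ) by push_cast; ring,
          show -((k:ℤ)+3) = -(((k+3:ℕ)):ℤ) by push_cast; ring,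
          zF_neg, zF_neg, zF_neg]
      rw [zpow_neg, zpow_neg, zpow_neg, zpow_natCast, zpow_natCast, zpow_natCast]
      rw [show bF x y (k+3) = x * bF x y (k+2) + y * bF x y (k+1) from rfl]
      have h1 : (-y)^(k+1) ≠ 0 := pow_ne_zero _ hw
      have h2 : (-y)^(k+2) ≠ 0 := pow_ne_zero _ hw
      have h3 : (-y)^(k+3) ≠ 0 := pow_ne_zero _ hw
      field_simp
      ring

lemma zF_up (hy : y ≠ 0) (n : ℤ) : zF x y (n+1) = x * zF x y n + y * zF x y (n-1) := by
  have := zF_add_two x y hy (n-1)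
  simp only [show (n-1)+2 = n+1 by ring, show (n-1)+1 = n by ring] at this
  exact this

lemma zF_add (hy : y ≠ 0) (m n : ℤ) :
    zF x y (m + n) = zF x y (m+1) * zF x y n + y * zF x y m * zF x y (n-1) := by
  set A : ℤ → Prop := fun n =>
    ∀ m : ℤ, zF x y (m + n) = zF x y (m+1) * zF x y n + y * zF x y m * zF x y (n-1) with hA
  have base0 : A 0 := by
    intro m
    simp only [add_zero, zF_zero, zero_sub, zF_neg_one x y hy, mul_zero, zero_add]
    field_simp
  have base1 : A 1 := by
    intro m
    simp only [zF_one, mul_one, sub_self, zF_zero, mul_zero, add_zero]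
  have up : ∀ n : ℤ, A n → A (n+1) → A (n+2) := by
    intro n h0 h1 m
    have r1 := zF_add_two x y hy (m+n)
    have r2 := zF_add_two x y hy n
    have r3 := zF_up x y hy n
    have e0 := h0 m
    have e1 := h1 m
    simp only [show m+(n+1) = m+n+1 by ring, show n+1-1 = n by ring] at e1
    simp only [show m+(n+2) = m+n+2 by ring, show n+2-1 = n+1 by ring]
    linear_combination r1 + x*e1 + y*e0 - zF x y (m+1)*r2 - y*zF x y m*r3
  have down : ∀ n : ℤ, A (n+1) → A (n+2) → A n := by
    intro n h1 h2 m
    apply mul_left_cancel₀ hy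
    have r1 := zF_add_two x y hy (m+n)
    have r2 := zF_add_two x y hy n
    have r3 := zF_up x y hy n
    have e1 := h1 m
    have e2 := h2 m
    simp only [show m+(n+1) = m+n+1 by ring, show n+1-1 = n by ring] at e1
    simp only [show m+(n+2) = m+n+2 by ring, show n+2-1 = n+1 by ring] at e2
    linear_combination -r1 + e2 - x*e1 + zF x y (m+1)*r2 + y*zF x y m*r3
  have main : ∀ n : ℤ, A n ∧ A (n+1) := by
    intro n
    induction n using Int.induction_on with
    | zero => exact ⟨base0, base1⟩
    | succ k ih => exact ⟨ih.2, up k ih.1 ih.2⟩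
    | pred k ih =>
      have h1 : A (-(k:ℤ)-1+1) := by
        rw [show -(k:ℤ)-1+1 = -(k:ℤ) by ring]
        exact ih.1
      have h2 : A (-(k:ℤ)-1+2) := by
        rw [show -(k:ℤ)-1+2 = -(k:ℤ)+1 by ring]
        exact ih.2
      exact ⟨down _ h1 h2, h1⟩
  exact (main n).1 m

lemma zF_docagne (hy : y ≠ 0) (b m : ℤ) (a : ℤ) :
    zF x y a * zF x y (m + b) - zF x y (a + b) * zF x y m
      = -(-y)^a * zF x y b * zF x y (m - a) := by
  have hw : (-y) ≠ 0 := neg_ne_zero.mpr hy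
  set B : ℤ → Prop := fun a =>
    zF x y a * zF x y (m + b) - zF x y (a + b) * zF x y m
      = -(-y)^a * zF x y b * zF x y (m - a) with hB
  have base0 : B 0 := by
    simp only [hB, zF_zero, zero_mul, zero_add, zpow_zero, sub_zero, zero_sub]
    ring
  have base1 : B 1 := by
    have e := zF_add x y hy b m
    simp only [hB, zF_one, one_mul, zpow_one]
    simp only [show b + m = m + b by ring] at e
    linear_combination e - zF x y m * (by rw [add_comm] : zF x y (1+b) = zF x y (b+1))
  have up : ∀ a : ℤ, B a → B (a+1) → B (a+2) := by
    intro a h0 h1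
    have r1 := zF_add_two x y hy a
    have r2 : zF x y (a+2+b) = x * zF x y (a+1+b) + y * zF x y (a+b) := by
      have := zF_add_two x y hy (a+b)
      simp only [show a+b+2 = a+2+b by ring, show a+b+1 = a+1+b by ring] at this
      exact this
    have r3 : zF x y (m-a) = x * zF x y (m-a-1) + y * zF x y (m-a-2) := by
      have := zF_add_two x y hy (m-a-2)
      simp only [show m-a-2+2 = m-a by ring, show m-a-2+1 = m-a-1 by ring] at this
      exact this
    have z1 : (-y)^(a+1) = (-y)^a * (-y) := zpow_add_one₀ hw a
    have z2 : (-y)^(a+2) = (-y)^(a+1) * (-y) := by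
      have := zpow_add_one₀ hw (a+1)
      simpa [show a+1+1 = a+2 by ring] using this
    simp only [hB, show m-(a+1) = m-a-1 by ring] at h1
    simp only [hB, show m-(a+2) = m-a-2 by ring]
    linear_combination zF x y (m+b)*r1 - zF x y m*r2 + x*h1 + y*h0
      - y*((-y)^a)*(zF x y b)*r3
      + (-(zF x y b)*(y*zF x y (m-a-2) + x*zF x y (m-a-1)))*z1
      + (zF x y b * zF x y (m-a-2))*z2
  have down : ∀ a : ℤ, B (a+1) → B (a+2) → B a := by
    intro a h1 h2
    apply mul_left_cancel₀ hy
    have r1 := zF_add_two x y hy a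
    have r2 : zF x y (a+2+b) = x * zF x y (a+1+b) + y * zF x y (a+b) := by
      have := zF_add_two x y hy (a+b)
      simp only [show a+b+2 = a+2+b by ring, show a+b+1 = a+1+b by ring] at this
      exact this
    have r3 : zF x y (m-a) = x * zF x y (m-a-1) + y * zF x y (m-a-2) := by
      have := zF_add_two x y hy (m-a-2)
      simp only [show m-a-2+2 = m-a by ring, show m-a-2+1 = m-a-1 by ring] at this
      exact this
    have z1 : (-y)^(a+1) = (-y)^a * (-y) := zpow_add_one₀ hw a
    have z2 : (-y)^(a+2) = (-y)^(a+1) * (-y) := by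
      have := zpow_add_one₀ hw (a+1)
      simpa [show a+1+1 = a+2 by ring] using this
    simp only [hB, show m-(a+1) = m-a-1 by ring] at h1
    simp only [hB, show m-(a+2) = m-a-2 by ring] at h2
    linear_combination (-(zF x y (m+b)))*r1 + zF x y m*r2 + h2 - x*h1
      + y*((-y)^a)*(zF x y b)*r3
      + (x*(zF x y b)*(zF x y (m-a-1)) + y*(zF x y b)*(zF x y (m-a-2)))*z1
      + (-(zF x y b)*(zF x y (m-a-2)))*z2
  have main : ∀ a : ℤ, B a ∧ B (a+1) := by
    intro a
    induction a using Int.induction_on with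
    | zero => exact ⟨base0, base1⟩
    | succ k ih => exact ⟨ih.2, up k ih.1 ih.2⟩
    | pred k ih =>
      have h1 : B (-(k:ℤ)-1+1) := by
        rw [show -(k:ℤ)-1+1 = -(k:ℤ) by ring]; exact ih.1
      have h2 : B (-(k:ℤ)-1+2) := by
        rw [show -(k:ℤ)-1+2 = -(k:ℤ)+1 by ring]; exact ih.2
      exact ⟨down _ h1 h2, h1⟩
  exact (main a).1

end general

noncomputable def bP : ℕ → MvPolynomial (Fin 2) ℚ
  | 0 => 0
  | 1 => 1
  | n + 2 => MvPolynomial.X 0 * bP (n + 1) + MvPolynomial.X 1 * bP n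

lemma bP_map (n : ℕ) :
    algebraMap (MvPolynomial (Fin 2) ℚ) RF2 (bP n) = bF Xv Yv n := by
  induction n using Nat.twoStepInduction with
  | zero => simp [bP, bF]
  | one => simp [bP, bF]
  | more n ih1 ih2 =>
    rw [show bP (n+2) = MvPolynomial.X 0 * bP (n+1) + MvPolynomial.X 1 * bP n from rfl,
        bF_add_two]
    rw [map_add, map_mul, map_mul, ih1, ih2]
    rfl

lemma bP_eval (n : ℕ) :
    MvPolynomial.eval (fun _ => (1:ℚ)) (bP n) = Nat.fib n := by
  induction n using Nat.twoStepInduction with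
  | zero => simp [bP]
  | one => simp [bP]
  | more n ih1 ih2 =>
    rw [show bP (n+2) = MvPolynomial.X 0 * bP (n+1) + MvPolynomial.X 1 * bP n from rfl]
    simp [ih1, ih2, Nat.fib_add_two]
    push_cast
    ring

lemma bF_ne_zero {n : ℕ} (h : 1 ≤ n) : bF Xv Yv n ≠ 0 := by
  rw [← bP_map]
  intro h0
  have hinj := IsFractionRing.injective (MvPolynomial (Fin 2) ℚ) RF2
  have : bP n = 0 := by
    apply hinj
    rw [h0, map_zero]
  have heval := bP_eval n
  rw [this, map_zero] at heval
  have hpos := Nat.fib_pos.mpr h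
  have hne : (Nat.fib n : ℚ) ≠ 0 := Nat.cast_ne_zero.mpr hpos.ne'
  exact hne heval.symm

lemma Yv_ne_zero : Yv ≠ 0 := by
  unfold Yv
  intro h0
  have hinj := IsFractionRing.injective (MvPolynomial (Fin 2) ℚ) RF2
  have : (MvPolynomial.X 1 : MvPolynomial (Fin 2) ℚ) = 0 := by
    apply hinj; rw [h0, map_zero]
  exact MvPolynomial.X_ne_zero _ this

lemma den_ne_zero (s k : ℕ) (hs : 1 ≤ s) :
    (∏ j ∈ Finset.range k, bF Xv Yv (s * (j + 1))) ≠ 0 := by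
  apply Finset.prod_ne_zero_iff.mpr
  intro j _
  exact bF_ne_zero (by nlinarith)

lemma fibo_zero_right (s n : ℕ) : fibo Xv Yv s n 0 = 1 := by
  simp [fibo]

lemma fibo_mul (s n k : ℕ) (hs : 1 ≤ s) :
    fibo Xv Yv s n (k+1) * bF Xv Yv (s*(k+1)) = fibo Xv Yv s n k * bF Xv Yv (s*(n-k)) := by
  unfold fibo
  rw [Finset.prod_range_succ, Finset.prod_range_succ]
  have h1 := den_ne_zero s k hs
  have h2 : bF Xv Yv (s*(k+1)) ≠ 0 := bF_ne_zero (by nlinarith)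
  field_simp

lemma fibo_top (s t i : ℕ) (hs : 1 ≤ s) :
    fibo Xv Yv s (t+1) (i+1) * bF Xv Yv (s*(i+1)) = fibo Xv Yv s t i * bF Xv Yv (s*(t+1)) := by
  unfold fibo
  rw [Finset.prod_range_succ' (fun j => bF Xv Yv (s*((t+1) - j))) i]
  simp only [Nat.succ_sub_succ, Nat.sub_zero]
  rw [Finset.prod_range_succ (fun j => bF Xv Yv (s*(j + 1))) i]
  have h1 := den_ne_zero s i hs
  have h2 : bF Xv Yv (s*(i+1)) ≠ 0 := bF_ne_zero (by nlinarith)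
  field_simp

lemma fibo_eq_zero (s n k : ℕ) (h : n < k) : fibo Xv Yv s n k = 0 := by
  unfold fibo
  rw [Finset.prod_eq_zero (Finset.mem_range.mpr h)
    (by rw [Nat.sub_self, Nat.mul_zero]; rfl)]
  simp

lemma negOnePow_congr {a b : ℕ} (h : Even (a + b)) : (-1:RF2)^a = (-1:RF2)^b := by
  have hab : Even a ↔ Even b := Nat.even_add.mp h
  rcases Nat.even_or_odd a with ha | ha
  · rw [ha.neg_one_pow, (hab.mp ha).neg_one_pow]
  · have hb : Odd b := by
      rcases Nat.even_or_odd b with hb | hb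
      · exact absurd (hab.mpr hb) (Nat.not_even_iff_odd.mpr ha)
      · exact hb
    rw [ha.neg_one_pow, hb.neg_one_pow]

lemma two_dvd_E (s i : ℕ) : 2 ∣ s*i*(i+1) := by
  have h : 2 ∣ i*(i+1) := (Nat.even_mul_succ_self i).two_dvd
  rw [mul_assoc]
  exact Dvd.dvd.mul_left h s

lemma Ediv (s i : ℕ) : s*(i+1)*(i+1+1)/2 = s*i*(i+1)/2 + s*(i+1) := by
  obtain ⟨k, hk⟩ := two_dvd_E s i
  have h1 : s*(i+1)*(i+1+1) = s*i*(i+1) + 2*(s*(i+1)) := by ring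
  rw [h1, hk]
  generalize s*(i+1) = B
  omega

lemma he2div (s i : ℕ) :
    ((s*(i+1)+2*(s+1))*(i+1+1))/2 = s*i*(i+1)/2 + s*(i+1) + (s+1)*(i+1+1) := by
  obtain ⟨k, hk⟩ := two_dvd_E s i
  have h1 : (s*(i+1)+2*(s+1))*(i+1+1) = s*i*(i+1) + 2*(s*(i+1)) + 2*((s+1)*(i+1+1)) := by
    ring
  rw [h1, hk]
  generalize s*(i+1) = B
  generalize (s+1)*(i+1+1) = C
  omega


/-- Σ_{j=0}^{i} (−1)^{(sj+2(s+1))(j+1)/2} C(t+1,j)_{F_s} F_{ts(i−j)+m} y^{sj(j−1)/2}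
  = (−1)^{s+i+1+si(i+1)/2} C(t,i)_{F_s} F_{m−is} y^{si(i+1)/2}. -/
theorem fibopolynomial_fib_alternating_sum (s t i : ℕ) (m : ℤ) (hs : 1 ≤ s) :
    (∑ j ∈ Finset.range (i + 1),
        (-1 : RF2) ^ (((s * j + 2 * (s + 1)) * (j + 1)) / 2) *
          fibo Xv Yv s (t + 1) j *
            zF Xv Yv ((t * s * (i - j) : ℕ) + m) * Yv ^ ((s * j * (j - 1)) / 2)) =
      (-1 : RF2) ^ (s + i + 1 + (s * i * (i + 1)) / 2) *
        fibo Xv Yv s t i * zF Xv Yv (m - (i * s : ℕ)) * Yv ^ ((s * i * (i + 1)) / 2) := by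
  have hY : Yv ≠ 0 := Yv_ne_zero
  induction i generalizing m with
  | zero =>
    rw [Finset.sum_range_one]
    simp only [Nat.sub_self, mul_zero, zero_mul, Nat.cast_zero, zero_add, sub_zero,
      Nat.zero_div, pow_zero, mul_one, fibo_zero_right, add_zero]
    rw [show (2*(s+1))/2 = s+1 by omega]
  | succ i ih =>
    rw [Finset.sum_range_succ]
    have hsum : (∑ j ∈ Finset.range (i+1),
        (-1 : RF2) ^ (((s * j + 2 * (s + 1)) * (j + 1)) / 2) *
          fibo Xv Yv s (t + 1) j *
            zF Xv Yv ((t * s * (i + 1 - j) : ℕ) + m) * Yv ^ ((s * j * (j - 1)) / 2))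
        = ∑ j ∈ Finset.range (i+1),
        (-1 : RF2) ^ (((s * j + 2 * (s + 1)) * (j + 1)) / 2) *
          fibo Xv Yv s (t + 1) j *
            zF Xv Yv ((t * s * (i - j) : ℕ) + (((t*s : ℕ) : ℤ) + m)) *
              Yv ^ ((s * j * (j - 1)) / 2) := by
      refine Finset.sum_congr rfl fun j hj => ?_
      have hj' : j ≤ i := by
        have := Finset.mem_range.mp hj; omega
      have h1 : t*s*(i+1-j) = t*s*(i-j) + t*s := by
        rw [show i+1-j = (i-j)+1 from by omega]; ring
      rw [show ((t*s*(i+1-j) : ℕ) : ℤ) + m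
            = ((t*s*(i-j) : ℕ) : ℤ) + (((t*s : ℕ):ℤ) + m) from by rw [h1]; push_cast; ring]
    rw [hsum, ih (((t*s : ℕ) : ℤ) + m)]
    simp only [Nat.sub_self, mul_zero, Nat.cast_zero, zero_add, Nat.add_sub_cancel]
    rw [show s*(i+1)*i = s*i*(i+1) from by ring]
    rw [Ediv s i, he2div s i]
    rw [show ((i+1)*s : ℕ) = s*(i+1) from by ring]
    by_cases hit : i ≤ t
    · rw [show (((t*s : ℕ):ℤ) + m - ((i*s : ℕ):ℤ)) = m + ((s*(t-i) : ℕ):ℤ) from by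
        rw [Nat.cast_mul, Nat.cast_mul, Nat.cast_mul, Nat.cast_sub hit]; ring]
      have hs2 : (-1:RF2)^(s*i*(i+1)/2 + s*(i+1) + (s+1)*(i+1+1))
          = -(-1:RF2)^(s+i+1+s*i*(i+1)/2) := by
        rw [show -((-1:RF2))^(s+i+1+s*i*(i+1)/2) = (-1:RF2)^(s+i+1+s*i*(i+1)/2+1) from by
          rw [pow_succ]; ring]
        exact negOnePow_congr ⟨s*i*(i+1)/2 + s*i + 2*s + i + 2, by ring⟩
      have hT : (-1:RF2)^(s+(i+1)+1+(s*i*(i+1)/2 + s*(i+1)))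
          = -((-1:RF2)^(s+i+1+s*i*(i+1)/2) * (-1:RF2)^(s*(i+1))) := by
        rw [show s+(i+1)+1+(s*i*(i+1)/2 + s*(i+1)) = (s+i+1+s*i*(i+1)/2) + s*(i+1) + 1
              from by ring,
            pow_succ, pow_add]
        ring
      rw [hs2, hT]
      have h1 := fibo_top s t i hs
      have h2 := fibo_mul s t i hs
      have hFa : bF Xv Yv (s*(i+1)) ≠ 0 := bF_ne_zero (by nlinarith)
      have hdoc := zF_docagne Xv Yv hY ((s*(t-i) : ℕ) : ℤ) m ((s*(i+1) : ℕ) : ℤ)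
      rw [show (((s*(i+1):ℕ):ℤ) + ((s*(t-i):ℕ):ℤ)) = ((s*(t+1) : ℕ):ℤ) from by
            rw [← Nat.cast_add, show s*(i+1) + s*(t-i) = s*(t+1) from by
              rw [← Nat.mul_add, show i+1+(t-i) = t+1 from by omega]]] at hdoc
      rw [zF_natCast, zF_natCast, zF_natCast, zpow_natCast, neg_pow] at hdoc
      apply mul_right_cancel₀ hFa
      linear_combination
        ((-1:RF2)^(s+i+1+s*i*(i+1)/2) * Yv^(s*i*(i+1)/2) * fibo Xv Yv s t i) * hdoc
        - ((-1:RF2)^(s+i+1+s*i*(i+1)/2) * Yv^(s*i*(i+1)/2) * zF Xv Yv m) * h1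
        + ((-1:RF2)^(s+i+1+s*i*(i+1)/2) * (-1:RF2)^(s*(i+1))
            * Yv^(s*i*(i+1)/2 + s*(i+1)) * zF Xv Yv (m - ((s*(i+1):ℕ):ℤ))) * h2
    · have z1 : fibo Xv Yv s t i = 0 := fibo_eq_zero s t i (by omega)
      have z2 : fibo Xv Yv s (t+1) (i+1) = 0 := fibo_eq_zero s (t+1) (i+1) (by omega)
      have z3 : fibo Xv Yv s t (i+1) = 0 := fibo_eq_zero s t (i+1) (by omega)
      rw [z1, z2, z3]
      ring
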